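/- Assume Σ_{ii} > 0 and R_{ii} ≠ 0 for all i, and suppose α ∈ ℝ^d satisfies the polynomial identity γ(θ) = Σ_{i=1}^d (Σ_{ii}/(2R_{ii})) γ_i(θ)(α_i - θ_i) for all θ ∈ ℝ^d. If moreover ⟨μ, v^{(i)}⟩ ≠ 0 for every i, then α_i = Δ_i Q_{ii} for every i ∈ {1,…,d}. -/

import Mathlib

open Matrix

/-- If `Σ_{ii} > 0` and `R_{ii} ≠ 0` for all `i`, and `α` satisfies the
polynomial identity `γ(θ) = ∑ᵢ (Σ_{ii}/(2R_{ii})) γᵢ(θ)(αᵢ - θᵢ)` for all `θ`, and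
moreover `⟨μ, v⁽ⁱ⁾⟩ ≠ 0` for every `i`, then `αᵢ = Δᵢ Q_{ii}` for every `i`. -/
theorem statement3 (d : ℕ) (hd : 1 ≤ d)
    (S : Matrix (Fin d) (Fin d) ℝ) (hS : S.PosDef)
    (μ : Fin d → ℝ) (R : Matrix (Fin d) (Fin d) ℝ) (hR : IsUnit R)
    (Q : Matrix (Fin d) (Fin d) ℝ) (hQ : Q = R⁻¹)
    (v : Fin d → Fin d → ℝ) (hv : ∀ i j, v i j = Q i j)
    (Δ : Fin d → ℝ)
    (hΔ : ∀ i, Δ i = -2 * (μ ⬝ᵥ v i) / (v i ⬝ᵥ S.mulVec (v i)))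
    (γ : (Fin d → ℝ) → ℝ)
    (hγ : ∀ θ, γ θ = -(1/2 : ℝ) * (θ ⬝ᵥ S.mulVec θ) - μ ⬝ᵥ θ)
    (γc : Fin d → (Fin d → ℝ) → ℝ)
    (hγc : ∀ k θ, γc k θ = (fun j => R j k) ⬝ᵥ θ)
    (hSd : ∀ i, 0 < S i i) (hRd : ∀ i, R i i ≠ 0)
    (α : Fin d → ℝ)
    (hα : ∀ θ : Fin d → ℝ, γ θ = ∑ i, S i i / (2 * R i i) * γc i θ * (α i - θ i))
    (hμv : ∀ i, μ ⬝ᵥ v i ≠ 0) :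
    ∀ i : Fin d, α i = Δ i * Q i i := by
  have hQR : Q * R = 1 := by
    rw [hQ]; exact Matrix.nonsing_inv_mul R ((Matrix.isUnit_iff_isUnit_det R).mp hR)
  have hQRe : ∀ i k, ∑ j, Q i j * R j k = if i = k then 1 else 0 := by
    intro i k
    have := congrFun (congrFun hQR i) k
    simpa [Matrix.mul_apply, Matrix.one_apply] using this
  -- Linear part
  have Lin : ∀ j, ∑ i, S i i / (2 * R i i) * R j i * α i = -μ j := by
    intro j
    have h1 := hα (Pi.single j (1:ℝ))
    have h2 := hα (Pi.single j (-1:ℝ))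
    simp only [hγ, hγc] at h1 h2
    rw [show (Pi.single j (1:ℝ)) ⬝ᵥ S *ᵥ (Pi.single j 1) = S j j from by
      simp [Matrix.mulVec_single, dotProduct, Pi.single_apply, Finset.sum_ite_eq']] at h1
    rw [show (Pi.single j (-1:ℝ)) ⬝ᵥ S *ᵥ (Pi.single j (-1)) = S j j from by
      simp [Matrix.mulVec_single, dotProduct, Pi.single_apply, Finset.sum_ite_eq']] at h2
    rw [show μ ⬝ᵥ (Pi.single j (1:ℝ)) = μ j from by
      simp [dotProduct, Pi.single_apply, Finset.sum_ite_eq']] at h1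
    rw [show μ ⬝ᵥ (Pi.single j (-1:ℝ)) = -μ j from by
      simp [dotProduct, Pi.single_apply, Finset.sum_ite_eq']] at h2
    simp only [show ∀ i, (fun l => R l i) ⬝ᵥ (Pi.single j (1:ℝ)) = R j i from fun i => by
      simp [dotProduct, Pi.single_apply, Finset.sum_ite_eq'],
      show ∀ i, (fun l => R l i) ⬝ᵥ (Pi.single j (-1:ℝ)) = -R j i from fun i => by
      simp [dotProduct, Pi.single_apply, Finset.sum_ite_eq']] at h1 h2
    simp only [mul_sub, Finset.sum_sub_distrib] at h1 h2
    have s1 : ∑ x, S x x / (2 * R x x) * R j x * (Pi.single j (1:ℝ) : Fin d → ℝ) x = S j j / 2 := by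
      rw [Finset.sum_eq_single j]
      · simp only [Pi.single_eq_same, mul_one]
        field_simp [hRd j]
      · intro k _ hk; simp [Pi.single_apply, hk]
      · intro h; simp at h
    have s2 : ∑ x, S x x / (2 * R x x) * -R j x * (Pi.single j (-1:ℝ) : Fin d → ℝ) x = S j j / 2 := by
      rw [Finset.sum_eq_single j]
      · simp only [Pi.single_eq_same, mul_neg, neg_mul, neg_neg, mul_one]
        field_simp [hRd j]
      · intro k _ hk; simp [Pi.single_apply, hk]
      · intro h; simp at h
    have s3 : ∑ x, S x x / (2 * R x x) * -R j x * α x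
        = -∑ x, S x x / (2 * R x x) * R j x * α x := by
      rw [← Finset.sum_neg_distrib]
      exact Finset.sum_congr rfl fun k _ => by ring
    rw [s1] at h1
    rw [s2, s3] at h2
    linarith
  -- Quadratic part
  have Quad : ∀ θ : Fin d → ℝ,
      θ ⬝ᵥ S.mulVec θ = ∑ i, 2 * (S i i / (2 * R i i) * γc i θ * θ i) := by
    intro θ
    have h1 := hα θ
    have h2 := hα (-θ)
    rw [hγ] at h1 h2
    have hc : ∀ i, γc i (-θ) = -γc i θ := by intro i; simp [hγc]
    simp only [hc] at h2
    rw [show (-θ) ⬝ᵥ S *ᵥ (-θ) = θ ⬝ᵥ S *ᵥ θ from by simp [Matrix.mulVec_neg]] at h2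
    rw [show μ ⬝ᵥ (-θ) = -(μ ⬝ᵥ θ) from by simp] at h2
    calc θ ⬝ᵥ S *ᵥ θ
        = -((-(1/2:ℝ) * (θ ⬝ᵥ S *ᵥ θ) - μ ⬝ᵥ θ)
            + (-(1/2:ℝ) * (θ ⬝ᵥ S *ᵥ θ) - -(μ ⬝ᵥ θ))) := by ring
      _ = -((∑ i, S i i / (2 * R i i) * γc i θ * (α i - θ i))
            + ∑ i, S i i / (2 * R i i) * -γc i θ * (α i - (-θ) i)) := by rw [← h1, ← h2]
      _ = ∑ i, 2 * (S i i / (2 * R i i) * γc i θ * θ i) := by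
          rw [← Finset.sum_add_distrib, ← Finset.sum_neg_distrib]
          refine Finset.sum_congr rfl fun i _ => ?_
          simp only [Pi.neg_apply]; ring
  intro i
  -- γc k (v i) = δ_{ik}
  have hγcv : ∀ k, γc k (v i) = if i = k then 1 else 0 := by
    intro k
    rw [hγc, ← hQRe i k]
    simp [dotProduct, hv, mul_comm]
  -- v i ≠ 0
  have hne : v i ≠ 0 := by
    intro h
    have h1 := hγcv i
    rw [hγc, h] at h1
    simp at h1
  have hpos : 0 < v i ⬝ᵥ S *ᵥ v i := by
    have := hS.dotProduct_mulVec_pos hne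
    simpa using this
  -- v i ⬝ᵥ S v i = 2 * c_i * Q i i
  have hvS : v i ⬝ᵥ S *ᵥ v i = 2 * (S i i / (2 * R i i)) * Q i i := by
    rw [Quad (v i)]
    rw [Finset.sum_eq_single i]
    · rw [hγcv i, if_pos rfl, hv i i]
      ring
    · intro k _ hk
      rw [hγcv k]
      simp [Ne.symm hk]
    · intro h; simp at h
  have hQii : Q i i ≠ 0 := by
    intro h
    rw [hvS, h] at hpos
    simp at hpos
  -- extract α i from Lin
  have key : S i i / (2 * R i i) * α i = -(μ ⬝ᵥ v i) := by
    have e1 : ∑ j, Q i j * (∑ k, S k k / (2 * R k k) * R j k * α k)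
        = ∑ j, Q i j * (-μ j) := by
      refine Finset.sum_congr rfl fun j _ => ?_
      rw [Lin j]
    have e2 : ∑ j, Q i j * (∑ k, S k k / (2 * R k k) * R j k * α k)
        = ∑ k, (S k k / (2 * R k k) * α k) * (∑ j, Q i j * R j k) := by
      simp_rw [Finset.mul_sum]
      rw [Finset.sum_comm]
      exact Finset.sum_congr rfl fun k _ => Finset.sum_congr rfl fun j _ => by ring
    have e3 : ∑ k, (S k k / (2 * R k k) * α k) * (∑ j, Q i j * R j k)
        = S i i / (2 * R i i) * α i := by
      simp_rw [hQRe]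
      rw [Finset.sum_eq_single i]
      · simp
      · intro k _ hk; simp [Ne.symm hk]
      · intro h; simp at h
    have e4 : ∑ j, Q i j * (-μ j) = -(μ ⬝ᵥ v i) := by
      simp [dotProduct, hv, mul_comm, Finset.sum_neg_distrib]
    rw [e2, e3, e4] at e1
    exact e1
  -- finish
  rw [hΔ, hvS]
  have hRi := hRd i
  have hSi := ne_of_gt (hSd i)
  field_simp at key ⊢
  linear_combination key
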